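/- arXiv:1705.10502 — 2 statements merged into one kernel-verified Lean document; each statement's English description precedes it below -/
import Mathlib

section
/- Let C(U), C(X), C(Z) be pretriangulated categories related by gluing and equipped with weight structures compatible with the gluing. Let M_U be an object of the heart C(U)_{w=0}, and let C_{≤0} → i^* j_* M_U → C_{≥1} → C_{≤0}[1] be a distinguished triangle with C_{≤0} ∈ C(Z)_{w≤0} and C_{≥1} ∈ C(Z)_{w≥1}. Then there exists an object M of the heart C(X)_{w=0} together with isomorphisms j^* M ≅ M_U, i^* M ≅ C_{≤0}, and i^! M ≅ C_{≥1}[−1]. (Construction 1.) -/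
set_option linter.unusedVariables false

open CategoryTheory Limits Pretriangulated

universe w₁ w₂ w₃ w₄ v₁ v₂ v₃ v₄ u₁ u₂ u₃ u₄

/-- A weight structure on a pretriangulated category `C`: a pair of classes of objects
`(C_{w≤0}, C_{w≥0})`, each containing the zero objects and closed under isomorphisms and
retracts (direct summands), such that `C_{w≤0}[-1] ⊆ C_{w≤0}`, `C_{w≥0}[1] ⊆ C_{w≥0}`,
`Hom(A, B[1]) = 0` for `A ∈ C_{w≤0}`, `B ∈ C_{w≥0}`, and every object admits a weight
filtration. -/
structure WeightStructure (C : Type*) [Category C] [HasZeroObject C] [Preadditive C]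
    [HasShift C ℤ] [∀ n : ℤ, (shiftFunctor C n).Additive] [Pretriangulated C] where
  le : C → Prop
  ge : C → Prop
  le_zero : ∀ X : C, IsZero X → le X
  ge_zero : ∀ X : C, IsZero X → ge X
  le_iso : ∀ {X Y : C}, (X ≅ Y) → le X → le Y
  ge_iso : ∀ {X Y : C}, (X ≅ Y) → ge X → ge Y
  le_retract : ∀ {X Y : C} (s : X ⟶ Y) (r : Y ⟶ X), s ≫ r = 𝟙 X → le Y → le X
  ge_retract : ∀ {X Y : C} (s : X ⟶ Y) (r : Y ⟶ X), s ≫ r = 𝟙 X → ge Y → ge X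
  le_shift : ∀ X : C, le X → le (X⟦(-1 : ℤ)⟧)
  ge_shift : ∀ X : C, ge X → ge (X⟦(1 : ℤ)⟧)
  orth : ∀ {A B : C} (f : A ⟶ B⟦(1 : ℤ)⟧), le A → ge B → f = 0
  exists_weight_filtration : ∀ M : C, ∃ (A B : C) (f : A ⟶ M) (g : M ⟶ B)
    (h : B ⟶ A⟦(1 : ℤ)⟧), (Triangle.mk f g h ∈ distTriang C) ∧ le A ∧ ge (B⟦(-1 : ℤ)⟧)

namespace WeightStructure

variable {C : Type*} [Category C] [HasZeroObject C] [Preadditive C]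
    [HasShift C ℤ] [∀ n : ℤ, (shiftFunctor C n).Additive] [Pretriangulated C]

/-- `X ∈ C_{w ≤ n}`, i.e. `X[-n] ∈ C_{w ≤ 0}`. -/
def leW (w : WeightStructure C) (n : ℤ) (X : C) : Prop := w.le (X⟦(-n : ℤ)⟧)

/-- `X ∈ C_{w ≥ n}`, i.e. `X[-n] ∈ C_{w ≥ 0}`. -/
def geW (w : WeightStructure C) (n : ℤ) (X : C) : Prop := w.ge (X⟦(-n : ℤ)⟧)

/-- The heart `C_{w = 0}`. -/
def heart (w : WeightStructure C) (X : C) : Prop := w.le X ∧ w.ge X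

/-- `M` is without weights `m, …, n`: there is a distinguished triangle
`M_{≤ m-1} → M → M_{≥ n+1} → M_{≤ m-1}[1]` with `M_{≤ m-1} ∈ C_{w ≤ m-1}` and
`M_{≥ n+1} ∈ C_{w ≥ n+1}` (a weight filtration avoiding weights `m, …, n`). -/
def WithoutWeights (w : WeightStructure C) (m n : ℤ) (M : C) : Prop :=
  ∃ (A B : C) (f : A ⟶ M) (g : M ⟶ B) (h : B ⟶ A⟦(1 : ℤ)⟧),
    (Triangle.mk f g h ∈ distTriang C) ∧ w.leW (m - 1) A ∧ w.geW (n + 1) B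

end WeightStructure

/-- A weight-exact (exact) functor between pretriangulated categories equipped with
weight structures: `F(C_{w≤0}) ⊆ D_{w≤0}` and `F(C_{w≥0}) ⊆ D_{w≥0}`. -/
def WeightExact {C : Type*} [Category C] [HasZeroObject C] [Preadditive C]
    [HasShift C ℤ] [∀ n : ℤ, (shiftFunctor C n).Additive] [Pretriangulated C]
    {D : Type*} [Category D] [HasZeroObject D] [Preadditive D]
    [HasShift D ℤ] [∀ n : ℤ, (shiftFunctor D n).Additive] [Pretriangulated D]
    (wC : WeightStructure C) (wD : WeightStructure D) (F : C ⥤ D) : Prop :=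
  (∀ X : C, wC.le X → wD.le (F.obj X)) ∧ (∀ X : C, wC.ge X → wD.ge (F.obj X))

variable {CU : Type*} [Category CU] [HasZeroObject CU] [Preadditive CU]
  [HasShift CU ℤ] [∀ n : ℤ, (shiftFunctor CU n).Additive] [Pretriangulated CU]
variable {CX : Type*} [Category CX] [HasZeroObject CX] [Preadditive CX]
  [HasShift CX ℤ] [∀ n : ℤ, (shiftFunctor CX n).Additive] [Pretriangulated CX]
variable {CZ : Type*} [Category CZ] [HasZeroObject CZ] [Preadditive CZ]
  [HasShift CZ ℤ] [∀ n : ℤ, (shiftFunctor CZ n).Additive] [Pretriangulated CZ]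

/- The six gluing functors: `jl = j_!`, `js = j^*`, `jr = j_*`,
   `il = i^*`, `im = i_*`, `ir = i^!`; all of them are exact. -/
variable (jl : CU ⥤ CX) (js : CX ⥤ CU) (jr : CU ⥤ CX)
  (il : CX ⥤ CZ) (im : CZ ⥤ CX) (ir : CX ⥤ CZ)
  [jl.CommShift ℤ] [jl.IsTriangulated] [js.CommShift ℤ] [js.IsTriangulated]
  [jr.CommShift ℤ] [jr.IsTriangulated] [il.CommShift ℤ] [il.IsTriangulated]
  [im.CommShift ℤ] [im.IsTriangulated] [ir.CommShift ℤ] [ir.IsTriangulated]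
  [im.Full] [im.Faithful]
variable (adj₁ : jl ⊣ js) (adj₂ : js ⊣ jr) (adj₃ : il ⊣ im) (adj₄ : im ⊣ ir)

/-- The axioms of a gluing ("recollement") situation relating `C(U)`, `C(X)` and `C(Z)`:
`j^* ∘ i_* = 0`, the unit `id → j^* j_!` and the counit `j^* j_* → id` are isomorphisms,
and the two localization triangles `j_! j^* M → M → i_* i^* M → (j_! j^* M)[1]` and
`i_* i^! M → M → j_* j^* M → (i_* i^! M)[1]` are distinguished.
(Full faithfulness of `i_*` is part of the ambient variable context.) -/
structure IsGluing : Prop where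
  js_im_zero : ∀ Z : CZ, IsZero (js.obj (im.obj Z))
  unit_iso : IsIso adj₁.unit
  counit_iso : IsIso adj₂.counit
  tri₁ : ∀ M : CX, ∃ δ : im.obj (il.obj M) ⟶ (jl.obj (js.obj M))⟦(1 : ℤ)⟧,
    Triangle.mk (adj₁.counit.app M) (adj₃.unit.app M) δ ∈ distTriang CX
  tri₂ : ∀ M : CX, ∃ δ : jr.obj (js.obj M) ⟶ (im.obj (ir.obj M))⟦(1 : ℤ)⟧,
    Triangle.mk (adj₄.counit.app M) (adj₂.unit.app M) δ ∈ distTriang CX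

variable (wU : WeightStructure CU) (wX : WeightStructure CX) (wZ : WeightStructure CZ)

/-- Compatibility of the weight structures on `C(U)`, `C(X)`, `C(Z)` with the gluing:
the left adjoints `j_!`, `j^*`, `i^*`, `i_*` respect `(w ≤ 0)`, and the right adjoints
`j^*`, `j_*`, `i_*`, `i^!` respect `(w ≥ 0)`. -/
structure GluedWeights : Prop where
  jl_le : ∀ X : CU, wU.le X → wX.le (jl.obj X)
  js_le : ∀ X : CX, wX.le X → wU.le (js.obj X)
  js_ge : ∀ X : CX, wX.ge X → wU.ge (js.obj X)
  il_le : ∀ X : CX, wX.le X → wZ.le (il.obj X)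
  im_le : ∀ X : CZ, wZ.le X → wX.le (im.obj X)
  im_ge : ∀ X : CZ, wZ.ge X → wX.ge (im.obj X)
  jr_ge : ∀ X : CU, wU.ge X → wX.ge (jr.obj X)
  ir_ge : ∀ X : CX, wX.ge X → wZ.ge (ir.obj X)

namespace WeightStructure

variable {C : Type*} [Category C] [HasZeroObject C] [Preadditive C]
    [HasShift C ℤ] [∀ n : ℤ, (shiftFunctor C n).Additive] [Pretriangulated C]

/-- Orthogonality, reformulated: any map from a `w ≤ 0` object to an object `B` with
`B⟦-1⟧ ∈ w ≥ 0` vanishes. -/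
lemma orth' (w : WeightStructure C) {A B : C} (f : A ⟶ B) (hA : w.le A)
    (hB : w.ge (B⟦(-1 : ℤ)⟧)) : f = 0 := by
  have h := w.orth (f ≫ (shiftNegShift B (1 : ℤ)).inv) hA hB
  have h2 : f = (f ≫ (shiftNegShift B (1 : ℤ)).inv) ≫ (shiftNegShift B (1 : ℤ)).hom := by
    rw [Category.assoc, Iso.inv_hom_id, Category.comp_id]
  rw [h2, h, zero_comp]

/-- The class `w ≤ 0` is closed under extensions. -/
lemma le_ext (w : WeightStructure C) {T : Triangle C} (hT : T ∈ distTriang C)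
    (h₁ : w.le T.obj₁) (h₃ : w.le T.obj₃) : w.le T.obj₂ := by
  obtain ⟨A, B, f, g, h, hd, hA, hB⟩ := w.exists_weight_filtration T.obj₂
  have hg : g = 0 := by
    obtain ⟨g', hg'⟩ := Triangle.yoneda_exact₂ T hT g (w.orth' _ h₁ hB)
    rw [hg', w.orth' g' h₃ hB, comp_zero]
  obtain ⟨s, hs⟩ := Triangle.coyoneda_exact₂ (Triangle.mk f g h) hd (𝟙 T.obj₂)
    (by show 𝟙 _ ≫ g = 0; rw [hg, comp_zero])
  exact w.le_retract s f hs.symm hA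

/-- The class `w ≥ 0` is closed under extensions. -/
lemma ge_ext (w : WeightStructure C) {T : Triangle C} (hT : T ∈ distTriang C)
    (h₁ : w.ge T.obj₁) (h₃ : w.ge T.obj₃) : w.ge T.obj₂ := by
  obtain ⟨A, B, f, g, h, hd, hA, hB⟩ := w.exists_weight_filtration (T.obj₂⟦(1 : ℤ)⟧)
  have hT2 : T.rotate.rotate ∈ distTriang C :=
    rot_of_distTriang _ (rot_of_distTriang _ hT)
  have hf : f = 0 := by
    have h0 : f ≫ (T.rotate.rotate).mor₃ = 0 := by
      have horth : f ≫ (T.mor₂⟦(1 : ℤ)⟧') = 0 := w.orth _ hA h₃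
      show f ≫ (-(T.mor₂⟦(1 : ℤ)⟧')) = 0
      simp only [Preadditive.comp_neg, horth, neg_zero]
    obtain ⟨k, hk⟩ := Triangle.coyoneda_exact₃ (T.rotate.rotate) hT2 f h0
    have hk0 : k = 0 := w.orth k hA h₁
    rw [hk, hk0, zero_comp]; rfl
  obtain ⟨s, hs⟩ := Triangle.yoneda_exact₂ (Triangle.mk f g h) hd (𝟙 (T.obj₂⟦(1 : ℤ)⟧))
    (by show f ≫ 𝟙 _ = 0; rw [hf, zero_comp])
  change B ⟶ _ at s
  have hs' : g ≫ s = 𝟙 (T.obj₂⟦(1 : ℤ)⟧) := hs.symm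
  have hretr : (g⟦(-1 : ℤ)⟧') ≫ (s⟦(-1 : ℤ)⟧') = 𝟙 (T.obj₂⟦(1 : ℤ)⟧⟦(-1 : ℤ)⟧) := by
    rw [← Functor.map_comp, hs', CategoryTheory.Functor.map_id]
  have hge : w.ge (T.obj₂⟦(1 : ℤ)⟧⟦(-1 : ℤ)⟧) := w.ge_retract _ _ hretr hB
  exact w.ge_iso (shiftShiftNeg T.obj₂ (1 : ℤ)) hge

end WeightStructure

/-- **Construction 1.** Given `M_U` in the heart of `C(U)` and a weight filtration
`C_{≤0} → i^* j_* M_U → C_{≥1} → C_{≤0}[1]` with `C_{≤0} ∈ C(Z)_{w≤0}` and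
`C_{≥1} ∈ C(Z)_{w≥1}`, there is an object `M` of the heart of `C(X)` with
`j^* M ≅ M_U`, `i^* M ≅ C_{≤0}` and `i^! M ≅ C_{≥1}[-1]`. -/
theorem construction_of_extension
    (hglue : IsGluing jl js jr il im ir adj₁ adj₂ adj₃ adj₄)
    (hw : GluedWeights jl js jr il im ir wU wX wZ)
    (MU : CU) (hMU : wU.heart MU)
    (Cle Cge : CZ) (c₁ : Cle ⟶ il.obj (jr.obj MU)) (c₂ : il.obj (jr.obj MU) ⟶ Cge)
    (δ : Cge ⟶ Cle⟦(1 : ℤ)⟧)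
    (hdist : Triangle.mk c₁ c₂ δ ∈ distTriang CZ)
    (hCle : wZ.le Cle) (hCge : wZ.geW 1 Cge) :
    ∃ M : CX, wX.heart M ∧ Nonempty (js.obj M ≅ MU) ∧
      Nonempty (il.obj M ≅ Cle) ∧ Nonempty (ir.obj M ≅ Cge⟦(-1 : ℤ)⟧) := by
  haveI := hglue.counit_iso
  -- the map `j_* M_U → i_* C_{≥1}`
  set φ : jr.obj MU ⟶ im.obj Cge := adj₃.unit.app (jr.obj MU) ≫ im.map c₂ with hφ
  obtain ⟨M, a, d, hTd⟩ := Pretriangulated.distinguished_cocone_triangle₁ φ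
  set T : Triangle CX := Triangle.mk a φ d with hT
  -- Step A : `j^* M ≅ M_U`
  have hTjs : js.mapTriangle.obj T ∈ distTriang CU := js.map_distinguished T hTd
  have hzU : IsZero ((js.mapTriangle.obj T).obj₃) := hglue.js_im_zero Cge
  haveI : IsIso ((js.mapTriangle.obj T).mor₁) :=
    (Triangle.isZero₃_iff_isIso₁ _ hTjs).1 hzU
  have eU : js.obj M ≅ MU :=
    (@asIso _ _ _ _ ((js.mapTriangle.obj T).mor₁) this : js.obj M ≅ js.obj (jr.obj MU)) ≪≫
      asIso (adj₂.counit.app MU)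
  -- Step B : `i^! M ≅ C_{≥1}[-1]`
  have hTir : ir.mapTriangle.obj T ∈ distTriang CZ := ir.map_distinguished T hTd
  have hzZ : IsZero ((ir.mapTriangle.obj T).obj₂) := by
    rw [Limits.IsZero.iff_id_eq_zero]
    exact (adj₄.homEquiv _ _).symm.injective
      ((adj₂.homEquiv _ _).symm.injective ((hglue.js_im_zero _).eq_of_src _ _))
  haveI : IsIso ((ir.mapTriangle.obj T).mor₃) :=
    (Triangle.isZero₂_iff_isIso₃ _ hTir).1 hzZ
  have eIr : ir.obj M ≅ Cge⟦(-1 : ℤ)⟧ :=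
    (shiftShiftNeg (ir.obj M) (1 : ℤ)).symm ≪≫
      (shiftFunctor CZ (-1 : ℤ)).mapIso
        ((@asIso _ _ _ _ ((ir.mapTriangle.obj T).mor₃) this : ir.obj (im.obj Cge) ≅ (ir.obj M)⟦(1 : ℤ)⟧).symm) ≪≫
      (shiftFunctor CZ (-1 : ℤ)).mapIso (asIso (adj₄.unit.app Cge)).symm
  -- Step C : `i^* M ≅ C_{≤0}`
  have hTil : il.mapTriangle.obj T ∈ distTriang CZ := il.map_distinguished T hTd
  have hcomp : il.map φ ≫ adj₃.counit.app Cge = c₂ := by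
    rw [hφ, Functor.map_comp, Category.assoc]
    have hnat := adj₃.counit.naturality c₂
    dsimp at hnat
    rw [hnat, ← Category.assoc, adj₃.left_triangle_components, Category.id_comp]
  have hT3 : Triangle.mk (il.map a) c₂
      (inv (adj₃.counit.app Cge) ≫ (il.mapTriangle.obj T).mor₃) ∈ distTriang CZ := by
    refine isomorphic_distinguished _ hTil _ ?_
    refine Triangle.isoMk _ _ (Iso.refl _) (Iso.refl _)
      (asIso (adj₃.counit.app Cge)).symm ?_ ?_ ?_
    · exact (Category.comp_id _).trans (Category.id_comp _).symm
    · dsimp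
      exact (by rw [← hcomp, Category.assoc, IsIso.hom_inv_id, Category.comp_id] :
        c₂ ≫ inv (adj₃.counit.app Cge) = il.map φ).trans (Category.id_comp _).symm
    · exact (congrArg (fun k => (inv (adj₃.counit.app Cge) ≫ (il.mapTriangle.obj T).mor₃) ≫ k)
        ((shiftFunctor CZ 1).map_id (il.obj M))).trans (Category.comp_id _)
  have hrot := Pretriangulated.isoTriangleOfIso₁₂ ((Triangle.mk c₁ c₂ δ).rotate)
    ((Triangle.mk (il.map a) c₂
      (inv (adj₃.counit.app Cge) ≫ (il.mapTriangle.obj T).mor₃)).rotate)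
    (rot_of_distTriang _ hdist) (rot_of_distTriang _ hT3)
    (Iso.refl _) (Iso.refl _) (by exact (Category.comp_id _).trans (Category.id_comp _).symm)
  have e3 : Cle⟦(1 : ℤ)⟧ ≅ (il.obj M)⟦(1 : ℤ)⟧ := Triangle.π₃.mapIso hrot
  have eIl : il.obj M ≅ Cle :=
    (shiftShiftNeg (il.obj M) (1 : ℤ)).symm ≪≫
      (shiftFunctor CZ (-1 : ℤ)).mapIso e3.symm ≪≫ shiftShiftNeg Cle (1 : ℤ)
  -- Step D : `M` lies in the heart
  have hge : wX.ge M := by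
    have h1 : wX.ge ((im.obj Cge)⟦(-1 : ℤ)⟧) :=
      wX.ge_iso ((im.commShiftIso (-1 : ℤ)).app Cge) (hw.im_ge _ hCge)
    exact wX.ge_ext (inv_rot_of_distTriang _ hTd) h1 (hw.jr_ge MU hMU.2)
  have hle : wX.le M := by
    obtain ⟨δ₁, hδ₁⟩ := hglue.tri₁ M
    have h1 : wX.le (jl.obj (js.obj M)) := hw.jl_le _ (wU.le_iso eU.symm hMU.1)
    have h3 : wX.le (im.obj (il.obj M)) := hw.im_le _ (wZ.le_iso eIl.symm hCle)
    exact wX.le_ext hδ₁ h1 h3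
  exact ⟨M, ⟨hle, hge⟩, ⟨eU⟩, ⟨eIl⟩, ⟨eIr⟩⟩
end

section
/- Let C(U), C(X), C(Z) be pretriangulated categories related by gluing and equipped with weight structures compatible with the gluing. (1) Let M_U ∈ C(U)_{w=0,∂w≠0} and let M ∈ C(X)_{w=0,i^*w≤−1} satisfy j^* M ≅ M_U; then for every integer α ≤ 0, the object i^* j_* M_U is without weights α, α+1, …, 0 if and only if i^* M ∈ C(Z)_{w≤α−1}. (2) Let M_U ∈ C(U)_{w=0,∂w≠1} and let M ∈ C(X)_{w=0,i^!w≥1} satisfy j^* M ≅ M_U; then for every integer β ≥ 1, the object i^* j_* M_U is without weights 1, 2, …, β if and only if i^! M ∈ C(Z)_{w≥β}. (Remark 0F (b).) -/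
set_option linter.unusedVariables false

open CategoryTheory Limits Pretriangulated

universe w₁ w₂ w₃ w₄ v₁ v₂ v₃ v₄ u₁ u₂ u₃ u₄

variable {CU : Type*} [Category CU] [HasZeroObject CU] [Preadditive CU]
  [HasShift CU ℤ] [∀ n : ℤ, (shiftFunctor CU n).Additive] [Pretriangulated CU]
variable {CX : Type*} [Category CX] [HasZeroObject CX] [Preadditive CX]
  [HasShift CX ℤ] [∀ n : ℤ, (shiftFunctor CX n).Additive] [Pretriangulated CX]
variable {CZ : Type*} [Category CZ] [HasZeroObject CZ] [Preadditive CZ]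
  [HasShift CZ ℤ] [∀ n : ℤ, (shiftFunctor CZ n).Additive] [Pretriangulated CZ]

/- The six gluing functors: `jl = j_!`, `js = j^*`, `jr = j_*`,
   `il = i^*`, `im = i_*`, `ir = i^!`; all of them are exact. -/
variable (jl : CU ⥤ CX) (js : CX ⥤ CU) (jr : CU ⥤ CX)
  (il : CX ⥤ CZ) (im : CZ ⥤ CX) (ir : CX ⥤ CZ)
  [jl.CommShift ℤ] [jl.IsTriangulated] [js.CommShift ℤ] [js.IsTriangulated]
  [jr.CommShift ℤ] [jr.IsTriangulated] [il.CommShift ℤ] [il.IsTriangulated]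
  [im.CommShift ℤ] [im.IsTriangulated] [ir.CommShift ℤ] [ir.IsTriangulated]
  [im.Full] [im.Faithful]
variable (adj₁ : jl ⊣ js) (adj₂ : js ⊣ jr) (adj₃ : il ⊣ im) (adj₄ : im ⊣ ir)

variable (wU : WeightStructure CU) (wX : WeightStructure CX) (wZ : WeightStructure CZ)

namespace WeightStructure

variable {C : Type*} [Category C] [HasZeroObject C] [Preadditive C]
    [HasShift C ℤ] [∀ n : ℤ, (shiftFunctor C n).Additive] [Pretriangulated C]
variable (w : WeightStructure C)

lemma leW_iso {X Y : C} (e : X ≅ Y) {n : ℤ} (h : w.leW n X) : w.leW n Y :=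
  w.le_iso ((shiftFunctor C (-n)).mapIso e) h

lemma geW_iso {X Y : C} (e : X ≅ Y) {n : ℤ} (h : w.geW n X) : w.geW n Y :=
  w.ge_iso ((shiftFunctor C (-n)).mapIso e) h

lemma leW_shift {X : C} {n : ℤ} (k : ℤ) (h : w.leW n X) : w.leW (n + k) (X⟦k⟧) :=
  w.le_iso ((shiftFunctorAdd' C k (-(n + k)) (-n) (by ring)).app X) h

lemma geW_shift {X : C} {n : ℤ} (k : ℤ) (h : w.geW n X) : w.geW (n + k) (X⟦k⟧) :=
  w.ge_iso ((shiftFunctorAdd' C k (-(n + k)) (-n) (by ring)).app X) h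

lemma leW_unshift {X : C} {n : ℤ} (k : ℤ) (h : w.leW (n + k) (X⟦k⟧)) : w.leW n X :=
  w.le_iso ((shiftFunctorAdd' C k (-(n + k)) (-n) (by ring)).app X).symm h

lemma geW_unshift {X : C} {n : ℤ} (k : ℤ) (h : w.geW (n + k) (X⟦k⟧)) : w.geW n X :=
  w.ge_iso ((shiftFunctorAdd' C k (-(n + k)) (-n) (by ring)).app X).symm h

lemma leW_of_le {X : C} (h : w.le X) : w.leW 0 X := by
  have h0 : w.le (X⟦(0 : ℤ)⟧) := w.le_iso ((shiftFunctorZero C ℤ).symm.app X) h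
  show w.le (X⟦(-0 : ℤ)⟧)
  rw [neg_zero]; exact h0

lemma geW_of_ge {X : C} (h : w.ge X) : w.geW 0 X := by
  have h0 : w.ge (X⟦(0 : ℤ)⟧) := w.ge_iso ((shiftFunctorZero C ℤ).symm.app X) h
  show w.ge (X⟦(-0 : ℤ)⟧)
  rw [neg_zero]; exact h0

lemma leW_mono {X : C} {a b : ℤ} (hab : a ≤ b) (h : w.leW a X) : w.leW b X :=
  Int.le_induction (motive := fun b _ => w.leW b X) h
    (fun n _ ih => w.le_iso ((shiftFunctorAdd' C (-n) (-1 : ℤ) (-(n + 1))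
      (by ring)).app X).symm (w.le_shift _ ih)) b hab

lemma geW_mono {X : C} {a b : ℤ} (hab : b ≤ a) (h : w.geW a X) : w.geW b X :=
  Int.le_induction (motive := fun n _ => w.geW n X → w.geW b X) id
    (fun n _ ih hg => ih (w.ge_iso ((shiftFunctorAdd' C (-(n + 1)) (1 : ℤ) (-n)
      (by ring)).app X).symm (w.ge_shift _ hg))) a hab h

lemma hom_zero {X Y : C} {a b : ℤ} (hX : w.leW a X) (hY : w.geW b Y) (hab : a < b)
    (f : X ⟶ Y) : f = 0 := by
  have hX' : w.le (X⟦(1 - b : ℤ)⟧) := by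
    have h2 := w.leW_mono (show a ≤ b - 1 by omega) hX
    rw [show (1 - b : ℤ) = -(b - 1) by ring]
    exact h2
  have h0 : (shiftFunctor C (1 - b)).map f ≫
      ((shiftFunctorAdd' C (-b) (1 : ℤ) (1 - b) (by ring)).app Y).hom = 0 :=
    w.orth _ hX' hY
  have h1 : (shiftFunctor C (1 - b)).map f = 0 := by
    rw [← cancel_mono ((shiftFunctorAdd' C (-b) (1 : ℤ) (1 - b) (by ring)).app Y).hom,
      zero_comp]
    exact h0
  exact (shiftFunctor C (1 - b)).map_injective (by rw [h1, Functor.map_zero])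

lemma leW_retract' {X Y : C} {n : ℤ} (s : X ⟶ Y) (r : Y ⟶ X) (hsr : s ≫ r = 𝟙 X)
    (h : w.leW n Y) : w.leW n X :=
  w.le_retract ((shiftFunctor C (-n)).map s) ((shiftFunctor C (-n)).map r)
    (by rw [← Functor.map_comp, hsr, CategoryTheory.Functor.map_id]) h

lemma geW_retract' {X Y : C} {n : ℤ} (s : X ⟶ Y) (r : Y ⟶ X) (hsr : s ≫ r = 𝟙 X)
    (h : w.geW n Y) : w.geW n X :=
  w.ge_retract ((shiftFunctor C (-n)).map s) ((shiftFunctor C (-n)).map r)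
    (by rw [← Functor.map_comp, hsr, CategoryTheory.Functor.map_id]) h

/-- Core comparison lemma, part (1): given a distinguished triangle
`P → Q → N → P[1]` with `Q ∈ C_{w ≤ -1}` and `P ∈ C_{w ≥ 0}`, for `α ≤ 0`
we have: `N` is without weights `α, …, 0` iff `Q ∈ C_{w ≤ α - 1}`. -/
lemma avoid_iff_le {P Q N : C} {f₁ : P ⟶ Q} {g₁ : Q ⟶ N} {h₁ : N ⟶ P⟦(1 : ℤ)⟧}
    (hT : Triangle.mk f₁ g₁ h₁ ∈ distTriang C)
    (hQ : w.leW (-1) Q) (hP : w.geW 0 P) {α : ℤ} (hα : α ≤ 0) :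
    w.WithoutWeights α 0 N ↔ w.leW (α - 1) Q := by
  have hP1 : w.geW 1 (P⟦(1 : ℤ)⟧) := by
    have := w.geW_shift (X := P) 1 hP; rwa [zero_add] at this
  constructor
  · rintro ⟨A, B, a, b, c, hT2, hA, hB⟩
    have hB' : w.geW 1 B := by rwa [zero_add] at hB
    have hgb : g₁ ≫ b = 0 := w.hom_zero hQ hB' (by omega) _
    obtain ⟨φ, hφ⟩ : ∃ φ : Q ⟶ A, g₁ = φ ≫ a := Triangle.coyoneda_exact₂ _ hT2 g₁ hgb
    have hah : a ≫ h₁ = 0 := w.hom_zero hA hP1 (by omega) _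
    obtain ⟨ψ, hψ⟩ : ∃ ψ : A ⟶ Q, a = ψ ≫ g₁ := Triangle.coyoneda_exact₃ _ hT a hah
    have hz : (𝟙 Q - φ ≫ ψ) ≫ g₁ = 0 := by
      rw [Preadditive.sub_comp, Category.id_comp, Category.assoc, ← hψ, ← hφ, sub_self]
    obtain ⟨θ, hθ⟩ : ∃ θ : Q ⟶ P, 𝟙 Q - φ ≫ ψ = θ ≫ f₁ :=
      Triangle.coyoneda_exact₂ _ hT (𝟙 Q - φ ≫ ψ) hz
    have hθ0 : θ = 0 := w.hom_zero hQ hP (by omega) θ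
    have hretr : φ ≫ ψ = 𝟙 Q := by
      rw [hθ0, zero_comp] at hθ
      exact (sub_eq_zero.mp hθ).symm
    exact w.leW_retract' φ ψ hretr hA
  · intro hQ'
    exact ⟨Q, P⟦(1 : ℤ)⟧, g₁, h₁, (Triangle.mk f₁ g₁ h₁).rotate.mor₃,
      rot_of_distTriang _ hT, hQ', w.geW_shift 1 hP⟩

/-- Core comparison lemma, part (2): given a distinguished triangle
`P → Q → N → P[1]` with `Q ∈ C_{w ≤ 0}` and `P ∈ C_{w ≥ 1}`, for `β ≥ 1`
we have: `N` is without weights `1, …, β` iff `P ∈ C_{w ≥ β}`. -/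
lemma avoid_iff_ge {P Q N : C} {f₁ : P ⟶ Q} {g₁ : Q ⟶ N} {h₁ : N ⟶ P⟦(1 : ℤ)⟧}
    (hT : Triangle.mk f₁ g₁ h₁ ∈ distTriang C)
    (hQ : w.leW 0 Q) (hP : w.geW 1 P) {β : ℤ} (hβ : 1 ≤ β) :
    w.WithoutWeights 1 β N ↔ w.geW β P := by
  have hP2 : w.geW 2 (P⟦(1 : ℤ)⟧) := by
    have := w.geW_shift (X := P) 1 hP
    rwa [show (1 + 1 : ℤ) = 2 by norm_num] at this
  have hQ1 : w.leW 1 (Q⟦(1 : ℤ)⟧) := by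
    have := w.leW_shift (X := Q) 1 hQ; rwa [zero_add] at this
  constructor
  · rintro ⟨A, B, a, b, c, hT2, hA, hB⟩
    have hA' : w.leW 0 A := by rwa [show ((1 : ℤ) - 1) = 0 by norm_num] at hA
    have hah : a ≫ h₁ = 0 := w.hom_zero hA' hP2 (by omega) _
    obtain ⟨σ, hσ⟩ : ∃ σ : B ⟶ P⟦(1 : ℤ)⟧, h₁ = b ≫ σ := Triangle.yoneda_exact₂ _ hT2 h₁ hah
    have hgb : g₁ ≫ b = 0 := w.hom_zero hQ hB (by omega) _
    obtain ⟨τ, hτ⟩ : ∃ τ : P⟦(1 : ℤ)⟧ ⟶ B, b = h₁ ≫ τ := Triangle.yoneda_exact₃ _ hT b hgb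
    have he : h₁ ≫ (τ ≫ σ - 𝟙 (P⟦(1 : ℤ)⟧)) = 0 := by
      rw [Preadditive.comp_sub, Category.comp_id, ← Category.assoc, ← hτ, ← hσ, sub_self]
    obtain ⟨ρ, hρ⟩ : ∃ ρ : Q⟦(1 : ℤ)⟧ ⟶ P⟦(1 : ℤ)⟧,
        τ ≫ σ - 𝟙 (P⟦(1 : ℤ)⟧) = (Triangle.mk f₁ g₁ h₁).rotate.mor₃ ≫ ρ :=
      Triangle.yoneda_exact₃ _ (rot_of_distTriang _ hT) (τ ≫ σ - 𝟙 (P⟦(1 : ℤ)⟧)) he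
    have hρ0 : ρ = 0 := w.hom_zero hQ1 hP2 (by omega) ρ
    have hretr : τ ≫ σ = 𝟙 (P⟦(1 : ℤ)⟧) := by
      rw [hρ0] at hρ
      exact sub_eq_zero.mp (hρ.trans comp_zero)
    exact w.geW_unshift 1 (w.geW_retract' τ σ hretr hB)
  · intro hP'
    refine ⟨Q, P⟦(1 : ℤ)⟧, g₁, h₁, (Triangle.mk f₁ g₁ h₁).rotate.mor₃,
      rot_of_distTriang _ hT, ?_, w.geW_shift 1 hP'⟩
    rw [show ((1 : ℤ) - 1) = 0 by norm_num]
    exact hQ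

end WeightStructure

set_option linter.unusedSectionVars false in
/-- The localization triangle `i^! M → i^* M → i^* j_* (j^* M) → (i^! M)[1]` in `C(Z)`,
obtained by applying `i^*` to the second gluing triangle of `M` and transporting along
the counit isomorphism `i^* i_* ≅ id` and the given isomorphism `j^* M ≅ M_U`. -/
lemma glue_triangle
    (hglue : IsGluing jl js jr il im ir adj₁ adj₂ adj₃ adj₄)
    {MU : CU} (M : CX) (e : js.obj M ≅ MU) :
    ∃ (f : ir.obj M ⟶ il.obj M) (g : il.obj M ⟶ il.obj (jr.obj MU))
      (h : il.obj (jr.obj MU) ⟶ (ir.obj M)⟦(1 : ℤ)⟧),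
      Triangle.mk f g h ∈ distTriang CZ := by
  obtain ⟨δ, hTX⟩ := hglue.tri₂ M
  have hTm := il.map_distinguished _ hTX
  let Tm := il.mapTriangle.obj (Triangle.mk (adj₄.counit.app M) (adj₂.unit.app M) δ)
  let ε : il.obj (im.obj (ir.obj M)) ≅ ir.obj M := asIso (adj₃.counit.app (ir.obj M))
  let e₃ : il.obj (jr.obj (js.obj M)) ≅ il.obj (jr.obj MU) := il.mapIso (jr.mapIso e)
  refine ⟨ε.inv ≫ Tm.mor₁, Tm.mor₂ ≫ e₃.hom,
    e₃.inv ≫ Tm.mor₃ ≫ (shiftFunctor CZ (1 : ℤ)).map ε.hom, ?_⟩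
  refine isomorphic_distinguished _ hTm _ ?_
  refine Triangle.isoMk _ _ ε.symm (Iso.refl _) e₃.symm ?_ ?_ ?_
  · exact Category.comp_id _
  · exact (Category.assoc _ _ _).trans ((congrArg (fun t => Tm.mor₂ ≫ t) e₃.hom_inv_id).trans
      ((Category.comp_id _).trans (Category.id_comp _).symm))
  · exact (Category.assoc _ _ _).trans (congrArg (fun t => e₃.inv ≫ t)
      ((Category.assoc _ _ _).trans ((congrArg (fun t => Tm.mor₃ ≫ t)
        (((shiftFunctor CZ (1 : ℤ)).map_comp _ _).symm.trans
          ((congrArg (fun t => (shiftFunctor CZ (1 : ℤ)).map t) ε.hom_inv_id).trans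
            ((shiftFunctor CZ (1 : ℤ)).map_id _)))).trans (Category.comp_id _))))

/-- **Remark 0F (b).** (1) If `M_U ∈ C(U)_{w=0, ∂w ≠ 0}` and `M ∈ C(X)_{w=0, i^*w ≤ -1}`
with `j^* M ≅ M_U`, then for every `α ≤ 0`, `i^* j_* M_U` is without weights `α, …, 0`
iff `i^* M ∈ C(Z)_{w ≤ α-1}`. (2) If `M_U ∈ C(U)_{w=0, ∂w ≠ 1}` and
`M ∈ C(X)_{w=0, i^!w ≥ 1}` with `j^* M ≅ M_U`, then for every `β ≥ 1`, `i^* j_* M_U` is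
without weights `1, …, β` iff `i^! M ∈ C(Z)_{w ≥ β}`. -/
theorem one_sided_weights_avoided_iff_bounds
    (hglue : IsGluing jl js jr il im ir adj₁ adj₂ adj₃ adj₄)
    (hw : GluedWeights jl js jr il im ir wU wX wZ) :
    (∀ (MU : CU), (wU.heart MU ∧ wZ.WithoutWeights 0 0 (il.obj (jr.obj MU))) →
      ∀ (M : CX), (wX.heart M ∧ wZ.leW (-1) (il.obj M)) →
      Nonempty (js.obj M ≅ MU) → ∀ α : ℤ, α ≤ 0 →
      (wZ.WithoutWeights α 0 (il.obj (jr.obj MU)) ↔ wZ.leW (α - 1) (il.obj M))) ∧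
    (∀ (MU : CU), (wU.heart MU ∧ wZ.WithoutWeights 1 1 (il.obj (jr.obj MU))) →
      ∀ (M : CX), (wX.heart M ∧ wZ.geW 1 (ir.obj M)) →
      Nonempty (js.obj M ≅ MU) → ∀ β : ℤ, 1 ≤ β →
      (wZ.WithoutWeights 1 β (il.obj (jr.obj MU)) ↔ wZ.geW β (ir.obj M))) := by
  constructor
  · rintro MU ⟨hMU, -⟩ M ⟨hM, hMle⟩ ⟨e⟩ α hα
    obtain ⟨f, g, h, hT⟩ := glue_triangle jl js jr il im ir adj₁ adj₂ adj₃ adj₄ hglue M e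
    exact wZ.avoid_iff_le hT hMle (wZ.geW_of_ge (hw.ir_ge M hM.2)) hα
  · rintro MU ⟨hMU, -⟩ M ⟨hM, hMge⟩ ⟨e⟩ β hβ
    obtain ⟨f, g, h, hT⟩ := glue_triangle jl js jr il im ir adj₁ adj₂ adj₃ adj₄ hglue M e
    exact wZ.avoid_iff_ge hT (wZ.leW_of_le (hw.il_le M hM.1)) hMge hβ
end
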